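/- Let (M,g) be a compact manifold with smooth boundary and non-positive sectional curvature. For u ∈ Ω_l with l ≥ 1, one has ‖X_− u‖² + (1/α_{l−1}) P(u,u) ≤ (β_{l+1}/α_{l−1}) ‖X_+ u‖², where β_{l+1}/α_{l−1} = D_d(l)² with D_d(l) ≤ 1 for d ≥ 4. -/

import Mathlib

open scoped RealInnerProductSpace

/-- λ_k = k(k+d-2). -/
noncomputable def lamVal (d k : ℕ) : ℝ := (k : ℝ) * ((k : ℝ) + (d : ℝ) - 2)

/-- α_k = λ_k[(1 + 1/(k+d−2))² − 1] + (d−1)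
(equal to (2k+d−2)(k+d−1)/(k+d−2) for k ≥ 1). -/
noncomputable def alphaVal (d k : ℕ) : ℝ :=
  lamVal d k * ((1 + 1 / ((k : ℝ) + (d : ℝ) - 2)) ^ 2 - 1) + ((d : ℝ) - 1)

/-- β_k = λ_k[1 − (1 − 1/k)²] − (d−1). -/
noncomputable def betaVal (d k : ℕ) : ℝ :=
  lamVal d k * (1 - (1 - 1 / (k : ℝ)) ^ 2) - ((d : ℝ) - 1)

set_option maxHeartbeats 1000000 in
/-- for a compact `d`-manifold with smooth boundary and
non-positive sectional curvature, and `u ∈ Ω_l` with `l ≥ 1`,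
`‖X_−u‖² + (1/α_{l−1}) P(u,u) ≤ (β_{l+1}/α_{l−1}) ‖X_+u‖²`,
where `β_{l+1}/α_{l−1} = D_d(l)²` satisfies `D_d(l) ≤ 1` for `d ≥ 4`.

The setting is axiomatized as in the localized Pestov identity: `P(u,u)` is
the boundary term `(Tu, ∇_v u)_{∂SM}`; non-positive sectional curvature gives
`(R∇_v u, ∇_v u) ≤ 0`, and the localized Pestov identity on `Ω_l` is supplied
as a hypothesis. -/
theorem pestov_localized_inequality
    {H Z ZB : Type*}
    [NormedAddCommGroup H] [InnerProductSpace ℝ H]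
    [NormedAddCommGroup Z] [InnerProductSpace ℝ Z]
    [NormedAddCommGroup ZB] [InnerProductSpace ℝ ZB]
    (d : ℕ) (hd : 2 ≤ d) (l : ℕ) (hl : 1 ≤ l)
    (proj : ℕ → H →ₗ[ℝ] H)
    (Xp Xm : H →ₗ[ℝ] H)
    (gradV : H →ₗ[ℝ] Z) (curv : Z →ₗ[ℝ] Z) (Zop : H →ₗ[ℝ] Z)
    (Trest gradVrest : H →ₗ[ℝ] ZB)
    (u : H) (hu : proj l u = u)
    -- non-positive sectional curvature
    (hcurv : ⟪curv (gradV u), gradV u⟫ ≤ 0)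
    -- the frequency-localized Pestov identity with boundary term on Ω_l
    (hPestov : alphaVal d (l - 1) * ‖Xm u‖ ^ 2 - ⟪curv (gradV u), gradV u⟫ +
        ‖Zop u‖ ^ 2 + ⟪Trest u, gradVrest u⟫ = betaVal d (l + 1) * ‖Xp u‖ ^ 2) :
    ‖Xm u‖ ^ 2 + (alphaVal d (l - 1))⁻¹ * ⟪Trest u, gradVrest u⟫ ≤
      (betaVal d (l + 1) / alphaVal d (l - 1)) * ‖Xp u‖ ^ 2 ∧
    (4 ≤ d → betaVal d (l + 1) / alphaVal d (l - 1) ≤ 1) := by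

  have hx : (1:ℝ) ≤ (l:ℝ) := by exact_mod_cast hl
  have hy : (2:ℝ) ≤ (d:ℝ) := by exact_mod_cast hd
  have hcl : ((l-1:ℕ):ℝ) = (l:ℝ) - 1 := by
    have := Nat.cast_sub hl (R := ℝ); simpa using this
  set x : ℝ := (l:ℝ) with hxdef
  set y : ℝ := (d:ℝ) with hydef
  have halphaeq : alphaVal d (l-1) =
      (x - 1) * ((x - 1) + y - 2) * ((1 + 1 / ((x - 1) + y - 2)) ^ 2 - 1) + (y - 1) := by
    simp [alphaVal, lamVal, hcl, hydef]
  have hbetaeq : betaVal d (l+1) =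
      (x + 1) * ((x + 1) + y - 2) * (1 - (1 - 1 / (x + 1)) ^ 2) - (y - 1) := by
    simp only [betaVal, lamVal]; push_cast; ring
  have ht0 : 0 ≤ x + y - 3 := by linarith
  have halpha : (1:ℝ) ≤ alphaVal d (l-1) := by
    rcases eq_or_lt_of_le ht0 with h0 | h0
    · have hxy : (x - 1) + y - 2 = 0 := by linarith
      rw [halphaeq, hxy]
      have : x = 1 := by nlinarith
      nlinarith
    · have hxy : (0:ℝ) < (x - 1) + y - 2 := by linarith
      have hne : (x - 1) + y - 2 ≠ 0 := ne_of_gt hxy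
      rw [halphaeq]
      have key : (x - 1) * ((x - 1) + y - 2) * ((1 + 1 / ((x - 1) + y - 2)) ^ 2 - 1)
          = (x - 1) * (2 + 1 / ((x - 1) + y - 2)) := by
        field_simp; ring
      rw [key]
      have h1 : 0 ≤ 1 / ((x - 1) + y - 2) := by positivity
      nlinarith
  have hapos : (0:ℝ) < alphaVal d (l-1) := lt_of_lt_of_le one_pos halpha
  have hane : alphaVal d (l-1) ≠ 0 := ne_of_gt hapos
  constructor
  · have hZ : (0:ℝ) ≤ ‖Zop u‖ ^ 2 := by positivity
    have hmain : alphaVal d (l-1) * ‖Xm u‖ ^ 2 + ⟪Trest u, gradVrest u⟫ ≤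
        betaVal d (l+1) * ‖Xp u‖ ^ 2 := by linarith
    rw [div_mul_eq_mul_div, ← sub_nonneg]
    have : (betaVal d (l+1) * ‖Xp u‖ ^ 2 -
        (alphaVal d (l-1) * ‖Xm u‖ ^ 2 + ⟪Trest u, gradVrest u⟫)) / alphaVal d (l-1)
        = betaVal d (l+1) * ‖Xp u‖ ^ 2 / alphaVal d (l-1) -
          (‖Xm u‖ ^ 2 + (alphaVal d (l-1))⁻¹ * ⟪Trest u, gradVrest u⟫) := by
      field_simp
    rw [← this]
    apply div_nonneg (by linarith) (le_of_lt hapos)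
  · intro hd4
    have hy4 : (4:ℝ) ≤ y := by rw [hydef]; exact_mod_cast hd4
    rw [div_le_one hapos]
    have ht : (0:ℝ) < (x - 1) + y - 2 := by linarith
    have htne : (x - 1) + y - 2 ≠ 0 := ne_of_gt ht
    have hs : (0:ℝ) < x + 1 := by linarith
    have hsne : x + 1 ≠ 0 := ne_of_gt hs
    rw [hbetaeq, halphaeq]
    have key : ((x + 1) * ((x + 1) + y - 2) * (1 - (1 - 1 / (x + 1)) ^ 2) - (y - 1))
        * ((x - 1) + y - 2) * (x + 1) ≤
        ((x - 1) * ((x - 1) + y - 2) * ((1 + 1 / ((x - 1) + y - 2)) ^ 2 - 1) + (y - 1))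
        * ((x - 1) + y - 2) * (x + 1) := by
      have e1 : ((x + 1) * ((x + 1) + y - 2) * (1 - (1 - 1 / (x + 1)) ^ 2) - (y - 1))
          * ((x - 1) + y - 2) * (x + 1)
          = ((x + y - 1) * (2 * x + 1) - (y - 1) * (x + 1)) * ((x - 1) + y - 2) := by
        field_simp; ring
      have e2 : ((x - 1) * ((x - 1) + y - 2) * ((1 + 1 / ((x - 1) + y - 2)) ^ 2 - 1) + (y - 1))
          * ((x - 1) + y - 2) * (x + 1)
          = ((x - 1) * (2 * ((x - 1) + y - 2) + 1) + (y - 1) * ((x - 1) + y - 2)) * (x + 1) := by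
        field_simp; ring
      rw [e1, e2]
      nlinarith [sq_nonneg (x - 1), sq_nonneg (y - 4), mul_nonneg (sub_nonneg.2 hx) (sub_nonneg.2 hy4), sq_nonneg (x*y - x), mul_nonneg (mul_nonneg (sub_nonneg.2 hx) (sub_nonneg.2 hy4)) (sub_nonneg.2 hx), mul_nonneg (mul_nonneg (sub_nonneg.2 hx) (sub_nonneg.2 hy4)) (sub_nonneg.2 hy4)]
    have hpos : (0:ℝ) < (x - 1 + y - 2) * (x + 1) := mul_pos ht hs
    exact le_of_mul_le_mul_right (by nlinarith [key]) hpos
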